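/- For every integer k ≥ 2, Σ_{m=1}^{k} (-1)^m · ((m-1)!)^2 · U(k,m) = 0, where U(k,m) = (2/(2m)!) · Σ_{j=0}^{m} (-1)^j · C(2m, j) · (m-j)^(2k) are the central factorial numbers with even indices of the second kind. -/

import Mathlib

open Finset Nat

/-- The central factorial numbers with even indices of the second kind,
`U k m = T(2k, 2m) = (2/(2m)!) ∑_{j=0}^m (-1)^j C(2m, j) (m-j)^{2k}`. -/
def U (k m : ℕ) : ℚ :=
  (2 / (Nat.factorial (2 * m) : ℚ)) *
    ∑ j ∈ Finset.range (m + 1),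
      (-1 : ℚ) ^ j * ((2 * m).choose j : ℚ) * (((m - j) ^ (2 * k) : ℕ) : ℚ)


open Finset Nat

lemma tele (a : ℕ) : ∀ d : ℕ,
    ∑ i ∈ range (d + 1), (2 : ℚ) * ((a + i)! : ℚ) ^ 2 / ((i ! : ℚ) * ((2 * a + 2 + i)! : ℚ))
      = 2 * (((a + 1 + d)! : ℚ)) ^ 2 / (((a : ℚ) + 1) ^ 2 * (d ! : ℚ) * ((2 * a + 2 + d)! : ℚ)) := by
  intro d
  induction d with
  | zero =>
    rw [zero_add]
    simp only [Finset.range_one, sum_singleton, add_zero, factorial_zero, Nat.cast_one]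
    rw [show a + 1 + 0 = a + 1 by ring, factorial_succ a]
    have h1 : ((a)! : ℚ) ≠ 0 := by positivity
    have h2 : (((2 * a + 2)! : ℕ) : ℚ) ≠ 0 := by positivity
    push_cast
    field_simp
  | succ d ih =>
    rw [sum_range_succ, ih]
    rw [show a + (d + 1) = (a + d) + 1 by ring, show a + 1 + (d + 1) = (a + 1 + d) + 1 by ring,
      show 2 * a + 2 + (d + 1) = (2 * a + 2 + d) + 1 by ring,
      show a + 1 + d = (a + d) + 1 by ring]
    rw [factorial_succ ((a + d) + 1), factorial_succ (a + d), factorial_succ (2 * a + 2 + d),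
      factorial_succ d]
    have h2 : ((2 * a + 2 + d)! : ℚ) ≠ 0 := by positivity
    have h3 : ((d)! : ℚ) ≠ 0 := by positivity
    have h4 : ((a + d)! : ℚ) ≠ 0 := by positivity
    have h5 : ((a : ℚ) + 1) ≠ 0 := by positivity
    push_cast
    field_simp
    ring

lemma fwd_pow : ∀ r : ℕ, ∀ N : ℕ, r < N → (fwdDiff (1:ℕ))^[N] (fun x : ℕ ↦ ((x : ℚ)) ^ r) = 0 := by
  intro r
  induction r using Nat.strong_induction_on with
  | _ r IH =>
    intro N hN
    obtain ⟨N', rfl⟩ := Nat.exists_eq_add_of_lt hN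
    rw [show r + N' + 1 = (r + N') + 1 by rfl]
    have step : fwdDiff (1:ℕ) (fun x : ℕ ↦ ((x : ℚ)) ^ r) =
        fun x : ℕ ↦ ∑ i ∈ range r, (r.choose i : ℚ) * (x : ℚ) ^ i := by
      funext x
      simp only [fwdDiff]
      push_cast
      rw [add_pow, sum_range_succ]
      simp [mul_comm]
    rw [Function.iterate_succ_apply, step]
    have : (fun x : ℕ ↦ ∑ i ∈ range r, (r.choose i : ℚ) * (x : ℚ) ^ i)
        = ∑ i ∈ range r, (fun x : ℕ ↦ (r.choose i : ℚ) * (x : ℚ) ^ i) := by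
      funext x; simp
    rw [this, fwdDiff_iter_finset_sum]
    apply Finset.sum_eq_zero
    intro i hi
    have hi' := Finset.mem_range.mp hi
    have : (fun x : ℕ ↦ (r.choose i : ℚ) * (x : ℚ) ^ i)
        = (r.choose i : ℚ) • (fun x : ℕ ↦ ((x : ℚ)) ^ i) := by
      funext x; simp
    rw [this, fwdDiff_iter_const_smul, IH i hi' (r + N') (by omega)]
    simp

lemma alt_pow (N r : ℕ) (h : r < N) :
    ∑ j ∈ range (N + 1), (-1 : ℚ) ^ j * (N.choose j : ℚ) * (j : ℚ) ^ r = 0 := by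
  have h0 := fwdDiff_iter_eq_sum_shift (1 : ℕ) (fun x : ℕ ↦ ((x : ℚ)) ^ r) N 0
  rw [fwd_pow r N h] at h0
  have h0' : (0 : ℚ) = ∑ k ∈ range (N + 1),
      ((-1 : ℤ) ^ (N - k) * (N.choose k : ℤ)) • ((0 + k • 1 : ℕ) : ℚ) ^ r := by simpa using h0
  have h1 : ∀ j ∈ range (N + 1),
      (-1 : ℚ) ^ j * (N.choose j : ℚ) * (j : ℚ) ^ r
        = (-1 : ℚ) ^ N * (((-1 : ℤ) ^ (N - j) * (N.choose j : ℤ)) • ((0 + j • 1 : ℕ) : ℚ) ^ r) := by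
    intro j hj
    have hjN : j ≤ N := by have := Finset.mem_range.mp hj; omega
    have hNs : ((-1 : ℚ)) ^ N = (-1 : ℚ) ^ (N - j) * (-1 : ℚ) ^ j := by
      rw [← pow_add, Nat.sub_add_cancel hjN]
    have hsq : ((-1 : ℚ)) ^ (N - j) * ((-1 : ℚ)) ^ (N - j) = 1 := by
      rw [← pow_add]; exact Even.neg_one_pow ⟨N - j, rfl⟩
    rw [hNs]
    simp only [zsmul_eq_mul, zero_add, smul_eq_mul, mul_one]
    push_cast
    linear_combination (-(N.choose j : ℚ) * (j : ℚ) ^ r * (-1 : ℚ) ^ j) * hsq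
  rw [Finset.sum_congr rfl h1, ← Finset.mul_sum, ← h0', mul_zero]

lemma sym (k : ℕ) (hk : 2 ≤ k) :
    ∑ n ∈ Icc 1 k, (-1 : ℚ) ^ n * ((2 * k).choose (k + n) : ℚ) * (n : ℚ) ^ (2 * k - 2) = 0 := by
  set r := 2 * k - 2 with hr
  have hrlt : r < 2 * k := by omega
  have hreven : Even r := by refine ⟨k - 1, by omega⟩
  have hrpos : 0 < r := by omega
  set g : ℕ → ℚ := fun j ↦ (-1 : ℚ) ^ j * ((2 * k).choose j : ℚ) * ((j : ℚ) - (k : ℚ)) ^ r with hg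
  have hT : ∑ j ∈ range (2 * k + 1), g j = 0 := by
    have expand : ∀ j ∈ range (2 * k + 1), g j =
        ∑ i ∈ range (r + 1),
          ((-(k : ℚ)) ^ (r - i) * (r.choose i : ℚ)) * ((-1 : ℚ) ^ j * ((2 * k).choose j : ℚ) * (j : ℚ) ^ i) := by
      intro j _
      rw [hg]
      simp only
      rw [sub_eq_add_neg, add_pow, Finset.mul_sum]
      exact Finset.sum_congr rfl fun i _ ↦ by ring
    rw [Finset.sum_congr rfl expand, Finset.sum_comm]
    apply Finset.sum_eq_zero
    intro i hi
    rw [← Finset.mul_sum, alt_pow (2 * k) i (by have := Finset.mem_range.mp hi; omega), mul_zero]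
  -- split the range
  have hsplit : ∑ j ∈ range (2 * k + 1), g j
      = ∑ i ∈ range k, (g (k - 1 - i) + g (k + 1 + i)) + g k := by
    have e1 : ∑ j ∈ range k, g j = ∑ i ∈ range k, g (k - 1 - i) :=
      (Finset.sum_range_reflect (fun i ↦ g i) k).symm
    have e2 : ∑ i ∈ range (k + 1), g (k + i) = g k + ∑ i ∈ range k, g (k + 1 + i) := by
      rw [Finset.sum_range_succ', add_comm, add_zero]
      congr 1
      exact Finset.sum_congr rfl fun i _ ↦ by rw [show k + (i + 1) = k + 1 + i by ring]
    rw [show 2 * k + 1 = k + (k + 1) by ring, Finset.sum_range_add, e1, e2,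
      Finset.sum_add_distrib]
    ring
  have hgk : g k = 0 := by
    rw [hg]; simp only [sub_self]
    rw [zero_pow (by omega)]
    ring
  have key : ∀ i ∈ range k, g (k - 1 - i) + g (k + 1 + i)
      = 2 * (-1 : ℚ) ^ k * ((-1 : ℚ) ^ (1 + i) * ((2 * k).choose (k + (1 + i)) : ℚ) * ((1 + i : ℕ) : ℚ) ^ r) := by
    intro i hi
    have hik : i < k := Finset.mem_range.mp hi
    have hc : (2 * k).choose (k - 1 - i) = (2 * k).choose (k + 1 + i) := by
      have h1 : k + 1 + i ≤ 2 * k := by omega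
      have := Nat.choose_symm h1
      rw [show 2 * k - (k + 1 + i) = k - 1 - i by omega] at this
      rw [← this]
    have hsgn : (-1 : ℚ) ^ (k - 1 - i) = (-1 : ℚ) ^ (k + 1 + i) := by
      have h1 : (-1 : ℚ) ^ (k - 1 - i) * (-1 : ℚ) ^ (k + 1 + i) = 1 := by
        rw [← pow_add, show k - 1 - i + (k + 1 + i) = 2 * k by omega]
        exact Even.neg_one_pow ⟨k, by ring⟩
      have h2 : (-1 : ℚ) ^ (k + 1 + i) * (-1 : ℚ) ^ (k + 1 + i) = 1 := by
        rw [← pow_add]; exact Even.neg_one_pow ⟨k + 1 + i, by ring⟩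
      calc (-1 : ℚ) ^ (k - 1 - i) = (-1 : ℚ) ^ (k - 1 - i) * ((-1 : ℚ) ^ (k + 1 + i) * (-1 : ℚ) ^ (k + 1 + i)) := by
            rw [h2, mul_one]
        _ = ((-1 : ℚ) ^ (k - 1 - i) * (-1 : ℚ) ^ (k + 1 + i)) * (-1 : ℚ) ^ (k + 1 + i) := by ring
        _ = (-1 : ℚ) ^ (k + 1 + i) := by rw [h1, one_mul]
    have hcast : ((k - 1 - i : ℕ) : ℚ) = (k : ℚ) - ((1 + i : ℕ) : ℚ) := by
      rw [show k - 1 - i = k - (1 + i) by omega, Nat.cast_sub (by omega)]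
    have hneg : (((k - 1 - i : ℕ) : ℚ) - (k : ℚ)) ^ r = (((1 + i : ℕ) : ℚ)) ^ r := by
      rw [hcast, show (k : ℚ) - ((1 + i : ℕ) : ℚ) - (k : ℚ) = -((1 + i : ℕ) : ℚ) by ring,
        hreven.neg_pow]
    have hcast2 : (((k + 1 + i : ℕ) : ℚ) - (k : ℚ)) ^ r = (((1 + i : ℕ) : ℚ)) ^ r := by
      push_cast; ring_nf
    rw [hg]
    simp only
    rw [hc, hsgn, hneg, hcast2, show k + 1 + i = k + (1 + i) by ring, pow_add]
    ring
  rw [hsplit, hgk, add_zero, Finset.sum_congr rfl key] at hT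
  rw [← Finset.mul_sum] at hT
  have h2 : (2 * (-1 : ℚ) ^ k) ≠ 0 := by
    simp [pow_ne_zero]
  have hT2 := (mul_eq_zero.mp hT).resolve_left h2
  rw [show Finset.Icc 1 k = Finset.Ico 1 (k + 1) by rw [Finset.Ico_add_one_right_eq_Icc],
    Finset.sum_Ico_eq_sum_range]
  simpa using hT2

lemma inner_tele (n k : ℕ) (h1 : 1 ≤ n) (h2 : n ≤ k) :
    ∑ m ∈ Icc n k, (2 : ℚ) * (((m - 1)! : ℚ)) ^ 2 / (((m - n)! : ℚ) * ((m + n)! : ℚ))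
      = 2 * ((k ! : ℚ)) ^ 2 / ((n : ℚ) ^ 2 * ((k - n)! : ℚ) * ((k + n)! : ℚ)) := by
  rw [← Finset.Ico_add_one_right_eq_Icc, Finset.sum_Ico_eq_sum_range,
    show k + 1 - n = (k - n) + 1 by omega]
  calc ∑ i ∈ range (k - n + 1),
        (2 : ℚ) * (((n + i - 1)! : ℚ)) ^ 2 / (((n + i - n)! : ℚ) * ((n + i + n)! : ℚ))
      = ∑ i ∈ range ((k - n) + 1),
        (2 : ℚ) * (((n - 1 + i)! : ℚ)) ^ 2 / ((i ! : ℚ) * ((2 * (n - 1) + 2 + i)! : ℚ)) := by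
        refine Finset.sum_congr rfl fun i _ ↦ by
          rw [show n + i - 1 = n - 1 + i by omega, show n + i - n = i by omega,
            show n + i + n = 2 * (n - 1) + 2 + i by omega]
    _ = 2 * (((n - 1 + 1 + (k - n))! : ℚ)) ^ 2
        / ((((n - 1 : ℕ) : ℚ) + 1) ^ 2 * ((k - n)! : ℚ) * ((2 * (n - 1) + 2 + (k - n))! : ℚ)) :=
        tele (n - 1) (k - n)
    _ = 2 * ((k ! : ℚ)) ^ 2 / ((n : ℚ) ^ 2 * ((k - n)! : ℚ) * ((k + n)! : ℚ)) := by
        rw [show n - 1 + 1 + (k - n) = k by omega, show 2 * (n - 1) + 2 + (k - n) = k + n by omega,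
          show ((n - 1 : ℕ) : ℚ) + 1 = (n : ℚ) by rw [Nat.cast_sub h1]; ring]

theorem stmt_16 (k : ℕ) (hk : 2 ≤ k) :
    ∑ m ∈ Finset.Icc 1 k, (-1 : ℚ) ^ m * (Nat.factorial (m - 1) : ℚ) ^ 2 * U k m = 0 := by
  set h : ℕ → ℕ → ℚ := fun m n ↦
    (-1 : ℚ) ^ n * ((n : ℚ)) ^ (2 * k)
      * (2 * (((m - 1)! : ℚ)) ^ 2 / (((m - n)! : ℚ) * ((m + n)! : ℚ))) with hh
  have step1 : ∀ m ∈ Icc 1 k,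
      (-1 : ℚ) ^ m * ((m - 1)! : ℚ) ^ 2 * U k m = ∑ n ∈ Icc 1 m, h m n := by
    intro m hm
    obtain ⟨hm1, hmk⟩ := Finset.mem_Icc.mp hm
    rw [U, Finset.mul_sum, Finset.mul_sum]
    rw [← Finset.sum_range_reflect]
    simp only [Nat.add_sub_cancel]
    rw [Finset.sum_range_succ']
    have hz : (-1 : ℚ) ^ m * ((m - 1)! : ℚ) ^ 2 *
        (2 / ((2 * m)! : ℚ) * ((-1 : ℚ) ^ (m - 0) * (((2 * m).choose (m - 0) : ℚ)) * (((m - (m - 0)) ^ (2 * k) : ℕ) : ℚ))) = 0 := by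
      rw [Nat.sub_zero, Nat.sub_self, Nat.zero_pow (by omega)]
      push_cast
      ring
    rw [hz, add_zero]
    rw [show Icc 1 m = Ico 1 (m + 1) by rw [Finset.Ico_add_one_right_eq_Icc], Finset.sum_Ico_eq_sum_range,
      show m + 1 - 1 = m from rfl]
    refine Finset.sum_congr rfl fun i hi ↦ ?_
    have him : i < m := Finset.mem_range.mp hi
    rw [show m - (i + 1) = m - 1 - i by omega, show m - (m - 1 - i) = 1 + i by omega]
    have hs2 : (-1 : ℚ) ^ m * (-1 : ℚ) ^ (m - 1 - i) = (-1 : ℚ) ^ (1 + i) := by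
      have e1 : (-1 : ℚ) ^ m = (-1 : ℚ) ^ (m - 1 - i) * (-1 : ℚ) ^ (1 + i) := by
        rw [← pow_add, show m - 1 - i + (1 + i) = m by omega]
      have e2 : (-1 : ℚ) ^ (m - 1 - i) * (-1 : ℚ) ^ (m - 1 - i) = 1 := by
        rw [← pow_add]; exact Even.neg_one_pow ⟨m - 1 - i, by ring⟩
      calc (-1 : ℚ) ^ m * (-1 : ℚ) ^ (m - 1 - i)
          = ((-1 : ℚ) ^ (m - 1 - i) * (-1 : ℚ) ^ (m - 1 - i)) * (-1 : ℚ) ^ (1 + i) := by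
            rw [e1]; ring
        _ = (-1 : ℚ) ^ (1 + i) := by rw [e2, one_mul]
    have hc : (((2 * m).choose (m - 1 - i)) : ℚ)
        = ((2 * m)! : ℚ) / (((m - 1 - i)! : ℚ) * ((m + 1 + i)! : ℚ)) := by
      rw [Nat.cast_choose ℚ (show m - 1 - i ≤ 2 * m by omega),
        show 2 * m - (m - 1 - i) = m + 1 + i by omega]
    have hd1 : m - (1 + i) = m - 1 - i := by omega
    have hd2 : m + (1 + i) = m + 1 + i := by ring
    have hf1 : ((2 * m)! : ℚ) ≠ 0 := by positivity
    have hf2 : ((m - 1 - i)! : ℚ) ≠ 0 := by positivity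
    have hf3 : ((m + 1 + i)! : ℚ) ≠ 0 := by positivity
    rw [hh]
    simp only [hd1, hd2]
    rw [hc]
    push_cast
    calc (-1 : ℚ) ^ m * ((m - 1)! : ℚ) ^ 2 *
          (2 / ((2 * m)! : ℚ) * ((-1 : ℚ) ^ (m - 1 - i) *
            (((2 * m)! : ℚ) / (((m - 1 - i)! : ℚ) * ((m + 1 + i)! : ℚ))) * (1 + (i : ℚ)) ^ (2 * k)))
        = ((-1 : ℚ) ^ m * (-1 : ℚ) ^ (m - 1 - i)) *
            (((m - 1)! : ℚ) ^ 2 * (2 / ((2 * m)! : ℚ) *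
              (((2 * m)! : ℚ) / (((m - 1 - i)! : ℚ) * ((m + 1 + i)! : ℚ))) * (1 + (i : ℚ)) ^ (2 * k))) := by
          ring
      _ = (-1 : ℚ) ^ (1 + i) * (1 + (i : ℚ)) ^ (2 * k) *
            (2 * (((m - 1)! : ℚ)) ^ 2 / (((m - 1 - i)! : ℚ) * ((m + 1 + i)! : ℚ))) := by
          rw [hs2]; field_simp
  rw [Finset.sum_congr rfl step1]
  rw [Finset.sum_comm' (t' := Icc 1 k) (s' := fun n ↦ Icc n k)
    (by intro x y; simp only [Finset.mem_Icc]; omega)]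
  have step3 : ∀ n ∈ Icc 1 k, ∑ m ∈ Icc n k, h m n
      = (2 * ((k ! : ℚ)) ^ 2 / ((2 * k)! : ℚ)) *
        ((-1 : ℚ) ^ n * ((2 * k).choose (k + n) : ℚ) * (n : ℚ) ^ (2 * k - 2)) := by
    intro n hn
    obtain ⟨hn1, hnk⟩ := Finset.mem_Icc.mp hn
    have : ∑ m ∈ Icc n k, h m n = (-1 : ℚ) ^ n * ((n : ℚ)) ^ (2 * k) *
        ∑ m ∈ Icc n k, 2 * (((m - 1)! : ℚ)) ^ 2 / (((m - n)! : ℚ) * ((m + n)! : ℚ)) := by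
      rw [Finset.mul_sum]
    rw [this, inner_tele n k hn1 hnk]
    have hcc : (((2 * k).choose (k + n)) : ℚ)
        = ((2 * k)! : ℚ) / (((k + n)! : ℚ) * ((k - n)! : ℚ)) := by
      rw [Nat.cast_choose ℚ (show k + n ≤ 2 * k by omega),
        show 2 * k - (k + n) = k - n by omega]
    rw [hcc]
    have hpn : ((n : ℚ)) ^ (2 * k) = (n : ℚ) ^ (2 * k - 2) * (n : ℚ) ^ 2 := by
      rw [← pow_add, show 2 * k - 2 + 2 = 2 * k by omega]
    rw [hpn]
    have hf1 : ((2 * k)! : ℚ) ≠ 0 := by positivity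
    have hf2 : ((k - n)! : ℚ) ≠ 0 := by positivity
    have hf3 : ((k + n)! : ℚ) ≠ 0 := by positivity
    have hf4 : (n : ℚ) ≠ 0 := by positivity
    field_simp
  rw [Finset.sum_congr rfl step3, ← Finset.mul_sum, sym k hk, mul_zero]
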